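/- Let X be a Polish space and f : X × {0} → ℝ (i.e. f : X → ℝ, viewing ℝ^0 as a single point) upper semi-analytic, and suppose there exists c : X → ℝ with f(x) ≤ c(x) for all x. Then there exists a Borel measurable C : X → ℝ with f(x) ≤ C(x) for all x. -/

import Mathlib

open MeasureTheory Set Function PiNat

namespace NovikovAux

variable {α : Type*} [MeasurableSpace α]

/-- A sequence of sets is (Borel) separated if it can be enclosed in measurable sets
with empty intersection. -/
def Sep (P : ℕ → Set α) : Prop :=
  ∃ B : ℕ → Set α, (∀ n, MeasurableSet (B n)) ∧ (∀ n, P n ⊆ B n) ∧ (⋂ n, B n) = ∅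

theorem Sep.mono {P Q : ℕ → Set α} (h : Sep P) (hQ : ∀ n, Q n ⊆ P n) : Sep Q := by
  obtain ⟨B, h1, h2, h3⟩ := h
  exact ⟨B, h1, fun n => (hQ n).trans (h2 n), h3⟩

theorem sep_update_iUnion {P : ℕ → Set α} {m : ℕ} {P' : ℕ → Set α}
    (h : ∀ i, Sep (Function.update P m (P' i))) :
    Sep (Function.update P m (⋃ i, P' i)) := by
  choose B hmeas hsub hempty using h
  refine ⟨fun n => if n = m then ⋃ i, B i m else ⋂ i, B i n, ?_, ?_, ?_⟩
  · intro n
    show MeasurableSet (if n = m then ⋃ i, B i m else ⋂ i, B i n)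
    split_ifs
    · exact MeasurableSet.iUnion fun i => hmeas i m
    · exact MeasurableSet.iInter fun i => hmeas i n
  · intro n
    show Function.update P m (⋃ i, P' i) n ⊆ if n = m then ⋃ i, B i m else ⋂ i, B i n
    by_cases h : n = m
    · subst h
      rw [Function.update_self, if_pos rfl]
      exact iUnion_mono fun i => by simpa using hsub i n
    · rw [Function.update_of_ne h, if_neg h]
      refine subset_iInter fun i => ?_
      have := hsub i n
      rwa [Function.update_of_ne h] at this
  · rw [eq_empty_iff_forall_notMem]
    intro x hx
    rw [mem_iInter] at hx
    have hxm : x ∈ ⋃ i, B i m := by simpa using hx m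
    obtain ⟨i₀, hi₀⟩ := mem_iUnion.1 hxm
    have hmem : x ∈ ⋂ n, B i₀ n := by
      rw [mem_iInter]
      intro n
      by_cases h : n = m
      · subst h; exact hi₀
      · have hxn : x ∈ ⋂ i, B i n := by simpa [h] using hx n
        exact mem_iInter.1 hxn i₀
    rw [hempty i₀] at hmem
    exact hmem

variable [TopologicalSpace α] [T2Space α] [OpensMeasurableSpace α]

/-- Novikov's separation theorem for continuous images of Baire space. -/
theorem sep_of_iInter_range_empty (g : ℕ → (ℕ → ℕ) → α) (hg : ∀ n, Continuous (g n))
    (hempty : (⋂ n, Set.range (g n)) = ∅) :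
    Sep (fun n => Set.range (g n)) := by
  classical
  by_contra hsep
  -- family of sets associated to a state (a finite cylinder for each index)
  set Fam : ((ℕ → ℕ → ℕ) × (ℕ → ℕ)) → ℕ → Set α :=
    fun p n => g n '' cylinder (p.1 n) (p.2 n) with hFam
  -- the one-step refinement: refine coordinate `m` by one more level
  have step : ∀ p : (ℕ → ℕ → ℕ) × (ℕ → ℕ), ¬ Sep (Fam p) → ∀ m, ∃ i : ℕ,
      ¬ Sep (Fam (Function.update p.1 m (Function.update (p.1 m) (p.2 m) i),
        Function.update p.2 m (p.2 m + 1))) := by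
    intro p hp m
    by_contra hcon
    push_neg at hcon
    apply hp
    have key : Fam p = Function.update (Fam p) m
        (⋃ i, g m '' cylinder (Function.update (p.1 m) (p.2 m) i) (p.2 m + 1)) := by
      funext n
      rcases eq_or_ne n m with rfl | hne
      · rw [Function.update_self]
        show g n '' PiNat.cylinder (p.1 n) (p.2 n) = _
        rw [← PiNat.iUnion_cylinder_update (p.1 n) (p.2 n), Set.image_iUnion]
      · rw [Function.update_of_ne hne]
    rw [key]
    apply sep_update_iUnion
    intro i
    have hi := hcon i
    have : Fam (Function.update p.1 m (Function.update (p.1 m) (p.2 m) i),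
        Function.update p.2 m (p.2 m + 1)) =
        Function.update (Fam p) m
          (g m '' cylinder (Function.update (p.1 m) (p.2 m) i) (p.2 m + 1)) := by
      funext n
      rcases eq_or_ne n m with rfl | hne
      · simp only [hFam, Function.update_self]
      · simp only [hFam, Function.update_of_ne hne]
    rw [this] at hi
    exact hi
  -- choose the refinements
  have hs0 : ¬ Sep (Fam ((fun _ _ => 0), fun _ => 0)) := by
    have : Fam ((fun _ _ => 0), fun _ => 0) = fun n => Set.range (g n) := by
      funext n
      simp [hFam, PiNat.cylinder_zero]
    rw [this]
    exact hsep
  let next : ℕ → {p : (ℕ → ℕ → ℕ) × (ℕ → ℕ) // ¬ Sep (Fam p)} →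
      {p : (ℕ → ℕ → ℕ) × (ℕ → ℕ) // ¬ Sep (Fam p)} := fun t q =>
    ⟨(Function.update q.1.1 (Nat.unpair t).1
        (Function.update (q.1.1 (Nat.unpair t).1) (q.1.2 (Nat.unpair t).1)
          (Classical.choose (step q.1 q.2 (Nat.unpair t).1))),
      Function.update q.1.2 (Nat.unpair t).1 (q.1.2 (Nat.unpair t).1 + 1)),
      Classical.choose_spec (step q.1 q.2 (Nat.unpair t).1)⟩
  let s : ℕ → {p : (ℕ → ℕ → ℕ) × (ℕ → ℕ) // ¬ Sep (Fam p)} := fun t =>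
    Nat.rec ⟨((fun _ _ => 0), fun _ => 0), hs0⟩ next t
  set σ : ℕ → ℕ → ℕ → ℕ := fun t => (s t).1.1 with hσ
  set d : ℕ → ℕ → ℕ := fun t => (s t).1.2 with hd
  have hs_succ : ∀ t, s (t + 1) = next t (s t) := fun t => rfl
  have hd_succ : ∀ t n, d (t + 1) n =
      if n = (Nat.unpair t).1 then d t n + 1 else d t n := by
    intro t n
    show (next t (s t)).1.2 n = _
    simp only [next, Function.update_apply]
    split <;> simp_all
  have hσ_succ : ∀ t n, n ≠ (Nat.unpair t).1 → σ (t + 1) n = σ t n := by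
    intro t n hn
    show (next t (s t)).1.1 n = _
    simp only [next]
    rw [Function.update_of_ne hn]
  have hσ_succ' : ∀ t, σ (t + 1) (Nat.unpair t).1 =
      Function.update (σ t (Nat.unpair t).1) (d t (Nat.unpair t).1)
        (Classical.choose (step (s t).1 (s t).2 (Nat.unpair t).1)) := by
    intro t
    show (next t (s t)).1.1 _ = _
    simp only [next]
    rw [Function.update_self]
  -- monotonicity of depths
  have dmono : ∀ n, Monotone fun t => d t n := by
    intro n
    apply monotone_nat_of_le_succ
    intro t
    rw [hd_succ]
    split <;> omega
  -- stabilization of the approximations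
  have stab : ∀ t t', t ≤ t' → ∀ n i, i < d t n → σ t' n i = σ t n i := by
    intro t t' htt'
    induction t' , htt' using Nat.le_induction with
    | base => intro n i _; rfl
    | succ t' htt' ih =>
      intro n i hi
      by_cases hne : n = (Nat.unpair t').1
      · have hle : d t n ≤ d t' n := dmono n htt'
        have hni : i ≠ d t' n := by omega
        rw [hne] at hni ⊢
        rw [hσ_succ' t', Function.update_of_ne hni, ← hne]
        exact ih n i hi
      · rw [hσ_succ t' n hne]
        exact ih n i hi
  -- depths tend to infinity
  have hgrow : ∀ n k, ∃ t, k ≤ d t n := by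
    intro n k
    induction k with
    | zero => exact ⟨0, Nat.zero_le _⟩
    | succ k ih =>
      obtain ⟨t, ht⟩ := ih
      refine ⟨Nat.pair n t + 1, ?_⟩
      have h1 : d (Nat.pair n t + 1) n = d (Nat.pair n t) n + 1 := by
        rw [hd_succ]
        simp [Nat.unpair_pair]
      rw [h1]
      have : d t n ≤ d (Nat.pair n t) n := dmono n (Nat.right_le_pair n t)
      omega
  -- the limit branches
  let x : ℕ → ℕ → ℕ := fun n i => σ (Classical.choose (hgrow n (i + 1))) n i
  have hx : ∀ t n, x n ∈ cylinder (σ t n) (d t n) := by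
    intro t n
    rw [mem_cylinder_iff]
    intro i hi
    have hτ : i + 1 ≤ d (Classical.choose (hgrow n (i + 1))) n :=
      Classical.choose_spec (hgrow n (i + 1))
    rcases le_total t (Classical.choose (hgrow n (i + 1))) with h | h
    · exact stab t _ h n i hi
    · exact (stab _ t h n i (by omega)).symm
  -- the limit points cannot all be equal
  have hne : ∃ a b, g a (x a) ≠ g b (x b) := by
    by_contra h
    push_neg at h
    have : g 0 (x 0) ∈ ⋂ n, Set.range (g n) :=
      mem_iInter.2 fun n => ⟨x n, h n 0⟩
    rw [hempty] at this
    exact this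
  obtain ⟨a, b, hab⟩ := hne
  have haneb : a ≠ b := by
    rintro rfl
    exact hab rfl
  obtain ⟨U, V, hU, hV, hyU, hyV, hUV⟩ := t2_separation hab
  -- continuity: images of deep cylinders fall in the open sets
  have hcont : ∀ (n : ℕ) (W : Set α), IsOpen W → g n (x n) ∈ W →
      ∃ k, g n '' cylinder (x n) k ⊆ W := by
    intro n W hW hmem
    have hopen : IsOpen (g n ⁻¹' W) := hW.preimage (hg n)
    obtain ⟨v, ⟨z, k, rfl⟩, hxv, hvsub⟩ :=
      (PiNat.isTopologicalBasis_cylinders (fun _ : ℕ => ℕ)).exists_subset_of_mem_open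
        (show x n ∈ g n ⁻¹' W from hmem) hopen
    rw [← PiNat.mem_cylinder_iff_eq.1 hxv] at hvsub
    exact ⟨k, Set.image_subset_iff.2 hvsub⟩
  obtain ⟨ka, hka⟩ := hcont a U hU hyU
  obtain ⟨kb, hkb⟩ := hcont b V hV hyV
  obtain ⟨ta, hta⟩ := hgrow a ka
  obtain ⟨tb, htb⟩ := hgrow b kb
  set t := max ta tb with htdef
  have hda : ka ≤ d t a := hta.trans (dmono a (le_max_left _ _))
  have hdb : kb ≤ d t b := htb.trans (dmono b (le_max_right _ _))
  -- the family at stage t is separated: contradiction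
  apply (s t).2
  refine ⟨fun n => if n = a then U else if n = b then V else univ, ?_, ?_, ?_⟩
  · intro n
    show MeasurableSet (if n = a then U else if n = b then V else univ)
    split_ifs
    · exact hU.measurableSet
    · exact hV.measurableSet
    · exact MeasurableSet.univ
  · intro n
    show g n '' cylinder (σ t n) (d t n) ⊆ if n = a then U else if n = b then V else univ
    by_cases hna : n = a
    · subst hna
      rw [if_pos rfl]
      refine (Set.image_mono ?_).trans hka
      intro z hz
      rw [mem_cylinder_iff] at hz ⊢
      intro i hi
      rw [hz i (lt_of_lt_of_le hi hda)]
      exact ((mem_cylinder_iff.1 (hx t n)) i (lt_of_lt_of_le hi hda)).symm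
    by_cases hnb : n = b
    · subst hnb
      rw [if_neg hna, if_pos rfl]
      refine (Set.image_mono ?_).trans hkb
      intro z hz
      rw [mem_cylinder_iff] at hz ⊢
      intro i hi
      rw [hz i (lt_of_lt_of_le hi hdb)]
      exact ((mem_cylinder_iff.1 (hx t n)) i (lt_of_lt_of_le hi hdb)).symm
    · rw [if_neg hna, if_neg hnb]
      exact subset_univ _
  · rw [eq_empty_iff_forall_notMem]
    intro z hz
    rw [mem_iInter] at hz
    have hza : z ∈ U := by simpa using hz a
    have hzb : z ∈ V := by simpa [Ne.symm haneb] using hz b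
    exact Set.disjoint_left.1 hUV hza hzb

/-- Novikov's separation theorem: a sequence of analytic sets with empty intersection
can be enclosed in Borel sets with empty intersection. -/
theorem sep_of_analyticSet (A : ℕ → Set α) (hA : ∀ n, AnalyticSet (A n))
    (h : (⋂ n, A n) = ∅) : Sep A := by
  classical
  by_cases he : ∃ n, A n = ∅
  · obtain ⟨n0, hn0⟩ := he
    refine ⟨fun n => if n = n0 then ∅ else univ, ?_, ?_, ?_⟩
    · intro n
      show MeasurableSet (if n = n0 then (∅ : Set α) else univ)
      split_ifs
      · exact MeasurableSet.empty
      · exact MeasurableSet.univ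
    · intro n
      show A n ⊆ if n = n0 then ∅ else univ
      by_cases hne : n = n0
      · subst hne; rw [if_pos rfl, hn0]
      · rw [if_neg hne]; exact subset_univ _
    · rw [eq_empty_iff_forall_notMem]
      intro z hz
      have : z ∈ (∅ : Set α) := by simpa using mem_iInter.1 hz n0
      exact this
  · push_neg at he
    have hex : ∀ n, ∃ gn : (ℕ → ℕ) → α, Continuous gn ∧ range gn = A n := by
      intro n
      have := hA n
      rw [AnalyticSet] at this
      rcases this with h0 | h1
      · exact absurd h0 (Set.nonempty_iff_ne_empty.1 (he n))
      · exact h1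
    choose g hgc hgr using hex
    have hsep := sep_of_iInter_range_empty g hgc (by simp only [hgr]; exact h)
    simp only [hgr] at hsep
    exact hsep

end NovikovAux

open NovikovAux

/-- Base case (n = 0) of the hyperplane selection theorem: a real-valued upper
semi-analytic function dominated by some real function is dominated by a Borel one. -/
theorem hyperplane_selection_base {X : Type*} [TopologicalSpace X] [PolishSpace X]
    [MeasurableSpace X] [BorelSpace X]
    (f : X → ℝ)
    (husa : ∀ γ : ℝ, AnalyticSet {x | γ < f x})
    (c : X → ℝ) (hc : ∀ x, f x ≤ c x) :
    ∃ C : X → ℝ, Measurable C ∧ ∀ x, f x ≤ C x := by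
  classical
  set A : ℕ → Set X := fun n => {x | (n : ℝ) < f x} with hA
  have hiA : (⋂ n, A n) = ∅ := by
    rw [eq_empty_iff_forall_notMem]
    intro x hx
    obtain ⟨n, hn⟩ := exists_nat_gt (f x)
    have h1 : (n : ℝ) < f x := mem_iInter.1 hx n
    exact absurd h1 (not_lt.2 hn.le)
  obtain ⟨B, hBm, hBsub, hBempty⟩ := sep_of_analyticSet A (fun n => husa n) hiA
  set B' : ℕ → Set X := fun n => ⋂ k ∈ Finset.range (n + 1), B k with hB'
  have hB'm : ∀ n, MeasurableSet (B' n) :=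
    fun n => MeasurableSet.biInter (Finset.range (n + 1)).countable_toSet fun k _ => hBm k
  have hB'sub : ∀ n, A n ⊆ B' n := by
    intro n x hx
    rw [hB', mem_iInter₂]
    intro k hk
    apply hBsub k
    simp only [hA, Set.mem_setOf_eq] at hx ⊢
    have : (k : ℝ) ≤ n := by
      exact_mod_cast Nat.le_of_lt_succ (Finset.mem_range.1 hk)
    linarith
  have hB'anti : Antitone B' := by
    intro m n hmn
    rw [hB']
    intro x hx
    rw [mem_iInter₂] at hx ⊢
    intro k hk
    exact hx k (Finset.mem_range.2 (lt_of_lt_of_le (Finset.mem_range.1 hk) (by omega)))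
  have hex : ∀ x, ∃ n, x ∉ B' n := by
    intro x
    by_contra hcon
    push_neg at hcon
    have hx : x ∈ ⋂ n, B n := by
      rw [mem_iInter]
      intro n
      have := hcon n
      rw [hB', mem_iInter₂] at this
      exact this n (Finset.mem_range.2 (Nat.lt_succ_self n))
    rw [hBempty] at hx
    exact hx
  refine ⟨fun x => (Nat.find (hex x) : ℝ), ?_, ?_⟩
  · have hfind : Measurable fun x => Nat.find (hex x) := by
      apply measurable_find hex
      intro n
      exact (hB'm n).compl
    exact Measurable.comp (measurable_from_top) hfind
  · intro x
    have hspec : x ∉ B' (Nat.find (hex x)) := Nat.find_spec (hex x)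
    have : x ∉ A (Nat.find (hex x)) := fun hxA => hspec (hB'sub _ hxA)
    rw [hA] at this
    simpa using this
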